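/- Let R be a commutative ring with identity and M an R-module. If N₁ and N₂ are strongly irreducible submodules of M, then N₁ ∩ N₂ is a strongly 2-irreducible submodule of M. -/
import Mathlib


def IsStronglyIrreducible {R M : Type*} [CommRing R] [AddCommGroup M] [Module R M]
    (N : Submodule R M) : Prop :=
  N ≠ ⊤ ∧ ∀ H₁ H₂ : Submodule R M, H₁ ⊓ H₂ ≤ N → H₁ ≤ N ∨ H₂ ≤ N

def IsStrongly2Irreducible {R M : Type*} [CommRing R] [AddCommGroup M] [Module R M]
    (N : Submodule R M) : Prop :=
  N ≠ ⊤ ∧ ∀ H₁ H₂ H₃ : Submodule R M, H₁ ⊓ H₂ ⊓ H₃ ≤ N →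
    H₁ ⊓ H₂ ≤ N ∨ H₁ ⊓ H₃ ≤ N ∨ H₂ ⊓ H₃ ≤ N

theorem stmt_8 {R M : Type*} [CommRing R] [AddCommGroup M] [Module R M]
    (N₁ N₂ : Submodule R M)
    (h₁ : IsStronglyIrreducible N₁) (h₂ : IsStronglyIrreducible N₂) :
    IsStrongly2Irreducible (N₁ ⊓ N₂) := by
  obtain ⟨hN₁, H1⟩ := h₁
  obtain ⟨hN₂, H2⟩ := h₂
  constructor
  · intro h
    exact hN₁ ((inf_eq_top_iff.mp h).1)
  · intro A B C h
    have t1 : A ≤ N₁ ∨ B ≤ N₁ ∨ C ≤ N₁ := by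
      rcases H1 (A ⊓ B) C (h.trans inf_le_left) with h' | h'
      · rcases H1 A B h' with h'' | h''
        · exact Or.inl h''
        · exact Or.inr (Or.inl h'')
      · exact Or.inr (Or.inr h')
    have t2 : A ≤ N₂ ∨ B ≤ N₂ ∨ C ≤ N₂ := by
      rcases H2 (A ⊓ B) C (h.trans inf_le_right) with h' | h'
      · rcases H2 A B h' with h'' | h''
        · exact Or.inl h''
        · exact Or.inr (Or.inl h'')
      · exact Or.inr (Or.inr h')
    rcases t1 with a | b | c <;> rcases t2 with a' | b' | c'
    · exact Or.inl (inf_le_of_left_le (le_inf a a'))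
    · exact Or.inl (le_inf (inf_le_of_left_le a) (inf_le_of_right_le b'))
    · exact Or.inr (Or.inl (le_inf (inf_le_of_left_le a) (inf_le_of_right_le c')))
    · exact Or.inl (le_inf (inf_le_of_right_le b) (inf_le_of_left_le a'))
    · exact Or.inl (inf_le_of_right_le (le_inf b b'))
    · exact Or.inr (Or.inr (le_inf (inf_le_of_left_le b) (inf_le_of_right_le c')))
    · exact Or.inr (Or.inl (le_inf (inf_le_of_right_le c) (inf_le_of_left_le a')))
    · exact Or.inr (Or.inr (le_inf (inf_le_of_right_le c) (inf_le_of_left_le b')))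
    · exact Or.inr (Or.inl (inf_le_of_right_le (le_inf c c')))
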